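/- For p in (0,1], the integral from 0 to 1 of -(1/p) r^{1/p - 1} ln(1 - r) dr equals the generalized harmonic number H_{1/p} = sum_{n>=1} (1/n - 1/(n + 1/p)). -/

import Mathlib

open MeasureTheory Real

lemma aux_integral_rpow (e : ℝ) (he : -1 < e) :
    ∫ r in Set.Ioo (0 : ℝ) 1, r ^ e = 1 / (e + 1) := by
  have h01 : (0:ℝ) ≤ 1 := by norm_num
  rw [← MeasureTheory.integral_Ioc_eq_integral_Ioo,
    ← intervalIntegral.integral_of_le h01, integral_rpow (Or.inl he)]
  rw [Real.one_rpow, Real.zero_rpow (by linarith)]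
  ring

lemma aux_beta_score (a : ℝ) (ha0 : 0 < a) :
    ∫ r in Set.Ioo (0 : ℝ) 1, -(a * r ^ (a - 1) * Real.log (1 - r)) =
      ∑' n : ℕ, (1 / (n + 1 : ℝ) - 1 / ((n + 1 : ℝ) + a)) := by
  -- pointwise series expansion on Ioo 0 1
  have key : ∀ r ∈ Set.Ioo (0:ℝ) 1,
      HasSum (fun n : ℕ => a / (n + 1) * r ^ (a + n))
        (-(a * r ^ (a - 1) * Real.log (1 - r))) := by
    intro r hr
    obtain ⟨hr0, hr1⟩ := hr
    have habs : |r| < 1 := by rw [abs_of_pos hr0]; exact hr1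
    have h := (hasSum_pow_div_log_of_abs_lt_one habs).mul_left (a * r ^ (a - 1))
    have heq : ∀ n : ℕ, a / (n + 1) * r ^ (a + n)
        = a * r ^ (a - 1) * (r ^ (n + 1) / (n + 1)) := by
      intro n
      have hn1 : ((n:ℝ) + 1) ≠ 0 := by positivity
      have hrw : r ^ (a + (n:ℝ)) = r ^ (a - 1) * r ^ (n + 1 : ℕ) := by
        rw [← Real.rpow_natCast r (n+1), ← Real.rpow_add hr0]
        push_cast
        ring_nf
      rw [hrw]
      field_simp
    have h2 : -(a * r ^ (a - 1) * Real.log (1 - r))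
        = a * r ^ (a - 1) * -Real.log (1 - r) := by ring
    rw [h2]
    exact h.congr_fun heq
  -- integrability of each term
  have hint : ∀ n : ℕ, IntegrableOn (fun r => a / (n + 1) * r ^ (a + n))
      (Set.Ioo (0:ℝ) 1) := by
    intro n
    have hn : (0:ℝ) ≤ (n:ℝ) := n.cast_nonneg
    have he : (-1:ℝ) < a + n := by linarith
    have h1 : IntervalIntegrable (fun r : ℝ => r ^ (a + n)) volume 0 1 :=
      intervalIntegral.intervalIntegrable_rpow' he
    have h2 : IntegrableOn (fun r : ℝ => r ^ (a + n)) (Set.Ioc (0:ℝ) 1) := by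
      rw [← intervalIntegrable_iff_integrableOn_Ioc_of_le (by norm_num)]
      exact h1
    exact (h2.mono_set Set.Ioo_subset_Ioc_self).const_mul _
  -- value of each integral
  have hval : ∀ n : ℕ, ∫ r in Set.Ioo (0:ℝ) 1, a / (n + 1) * r ^ (a + n)
      = 1 / (n + 1 : ℝ) - 1 / ((n + 1 : ℝ) + a) := by
    intro n
    have hn : (0:ℝ) ≤ (n:ℝ) := n.cast_nonneg
    have he : (-1:ℝ) < a + n := by linarith
    rw [MeasureTheory.integral_const_mul, aux_integral_rpow _ he]
    have h1 : (n:ℝ) + 1 ≠ 0 := by positivity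
    have h2 : a + (n:ℝ) + 1 ≠ 0 := by linarith
    have h3 : (n:ℝ) + 1 + a ≠ 0 := by linarith
    have hd : (1:ℝ)/((n:ℝ)+1) - 1/((n:ℝ)+1+a) = a / (((n:ℝ)+1)*((n:ℝ)+1+a)) := by
      rw [div_sub_div _ _ h1 h3]
      congr 1
      ring
    rw [hd, div_mul_eq_mul_div, mul_one_div, div_div]
    congr 1
    ring
  -- nonnegativity on Ioo
  have hnn : ∀ n : ℕ, ∀ r ∈ Set.Ioo (0:ℝ) 1, 0 ≤ a / (n + 1) * r ^ (a + n) := by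
    intro n r hr
    have := hr.1
    positivity
  -- summability of the integrals of norms
  have hsum : Summable (fun n : ℕ => (1 / (n + 1 : ℝ) - 1 / ((n + 1 : ℝ) + a))) := by
    have hb : Summable (fun n : ℕ => a * (1 / ((n:ℝ) + 1) ^ 2)) := by
      apply Summable.mul_left
      have := (summable_nat_add_iff (f := fun n : ℕ => 1 / ((n:ℝ)) ^ 2) 1).2
        (Real.summable_one_div_nat_pow.2 one_lt_two)
      simpa using this
    apply Summable.of_nonneg_of_le _ _ hb
    · intro n
      have h1 : (0:ℝ) < (n:ℝ) + 1 := by positivity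
      have h2 : (0:ℝ) < (n:ℝ) + 1 + a := by linarith
      rw [sub_nonneg, div_le_div_iff₀ h2 h1]
      nlinarith
    · intro n
      have h1 : (0:ℝ) < (n:ℝ) + 1 := by positivity
      have h2 : (0:ℝ) < (n:ℝ) + 1 + a := by linarith
      have hd : 1 / ((n:ℝ) + 1) - 1 / ((n:ℝ) + 1 + a) = a / (((n:ℝ) + 1) * ((n:ℝ) + 1 + a)) := by
        field_simp
        ring
      rw [hd, div_le_iff₀ (by positivity)]
      have hr : a * (1 / ((n:ℝ) + 1) ^ 2) * (((n:ℝ) + 1) * ((n:ℝ) + 1 + a))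
          = a * (((n:ℝ) + 1 + a) / ((n:ℝ) + 1)) := by
        field_simp
      rw [hr]
      have hge : (1:ℝ) ≤ ((n:ℝ) + 1 + a) / ((n:ℝ) + 1) := by
        rw [le_div_iff₀ h1]; linarith
      nlinarith
  -- rewrite the integrand as a tsum a.e. on Ioo
  have hcong : ∫ r in Set.Ioo (0 : ℝ) 1, -(a * r ^ (a - 1) * Real.log (1 - r))
      = ∫ r in Set.Ioo (0 : ℝ) 1, ∑' n : ℕ, a / (n + 1) * r ^ (a + n) := by
    apply MeasureTheory.setIntegral_congr_fun measurableSet_Ioo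
    intro r hr
    exact ((key r hr).tsum_eq).symm
  rw [hcong]
  rw [← MeasureTheory.integral_tsum_of_summable_integral_norm]
  · exact tsum_congr fun n => hval n
  · intro n
    exact hint n
  · apply hsum.congr
    intro n
    rw [← hval n]
    apply MeasureTheory.setIntegral_congr_fun measurableSet_Ioo
    intro r hr
    exact (Real.norm_of_nonneg (hnn n r hr)).symm

/-- Expected score of a watermarked token: for `p ∈ (0,1]`,
`∫₀¹ -(1/p) r^(1/p-1) log(1-r) dr` equals the generalized harmonic number
`H_{1/p} = ∑_{n ≥ 1} (1/n - 1/(n + 1/p))`. -/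
theorem beta_expected_score_eq_harmonic (p : ℝ) (hp : p ∈ Set.Ioc (0 : ℝ) 1) :
    ∫ r in Set.Ioo (0 : ℝ) 1, -((1 / p) * r ^ (1 / p - 1) * Real.log (1 - r)) =
      ∑' n : ℕ, (1 / (n + 1 : ℝ) - 1 / ((n + 1 : ℝ) + 1 / p)) := by
  exact aux_beta_score (1 / p) (by have := hp.1; positivity)
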